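/- arXiv:2103.15453 — 2 statements merged into one kernel-verified Lean document; each statement's English description precedes it below -/
import Mathlib

section
/- For a concrete arena A, the function 𝒫 mapping (symmetry classes of) alternating plays on A to alternating plays with pointers on the meager arena A⁰ is well-defined, injective, and preserves length and prefix. -/
set_option autoImplicit false

/-- Immediate causality `a ⋗ b` for a relation `le`. -/
def immOf {α : Type} (le : α → α → Prop) (a b : α) : Prop :=
  le a b ∧ a ≠ b ∧ ∀ c, le a c → le c b → c = a ∨ c = b

/-- Configurations: finite, down-closed, consistent sets. -/
def ConfigOf {α : Type} (le conflict : α → α → Prop) (x : Set α) : Prop :=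
  x.Finite ∧ (∀ e ∈ x, ∀ e', le e' e → e' ∈ x) ∧ ∀ e ∈ x, ∀ e' ∈ x, ¬ conflict e e'

/-- Minimality for a causal dependency relation. -/
def MinimalOf {α : Type} (le : α → α → Prop) (a : α) : Prop := ∀ a', le a' a → a' = a

/-- A set of pairs is the graph of a bijection between its domain and codomain. -/
def IsBijGraph {α : Type} (θ : Set (α × α)) : Prop :=
  ∀ p ∈ θ, ∀ q ∈ θ, ((p : α × α).1 = q.1 ↔ p.2 = q.2)

def symDom {α : Type} (θ : Set (α × α)) : Set α := Prod.fst '' θ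

def symCod {α : Type} (θ : Set (α × α)) : Set α := Prod.snd '' θ

/-- An arena with symmetry: an alternating, forestial, race-free event structure
with polarities (`true` = Player `+`, `false` = Opponent `−`), equipped with an
isomorphism family `Sym` of (graphs of) polarity-preserving bijections between
configurations, closed under identities, inverse, composition, restriction and
extension. -/
structure ArenaS (α : Type) where
  le : α → α → Prop
  conflict : α → α → Prop
  pol : α → Bool
  le_refl : ∀ e, le e e
  le_trans : ∀ {a b c : α}, le a b → le b c → le a c
  le_antisymm : ∀ {a b : α}, le a b → le b a → a = b
  finite_causes : ∀ e : α, Set.Finite {e' | le e' e}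
  conflict_irrefl : ∀ e, ¬ conflict e e
  conflict_symm : ∀ {a b : α}, conflict a b → conflict b a
  conflict_inherit : ∀ {a b b' : α}, conflict a b → le b b' → conflict a b'
  alternating : ∀ {a b : α}, immOf le a b → pol a ≠ pol b
  forestial : ∀ {a1 a2 a : α}, le a1 a → le a2 a → le a1 a2 ∨ le a2 a1
  race_free : ∀ {a1 a2 : α}, conflict a1 a2 →
    (∀ a1' a2', le a1' a1 → le a2' a2 → conflict a1' a2' → a1' = a1 ∧ a2' = a2) →
    pol a1 = pol a2
  Sym : Set (Set (α × α))
  sym_graph : ∀ θ ∈ Sym, IsBijGraph θ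
  sym_dom : ∀ θ ∈ Sym, ConfigOf le conflict (symDom θ)
  sym_cod : ∀ θ ∈ Sym, ConfigOf le conflict (symCod θ)
  sym_pol : ∀ θ ∈ Sym, ∀ p ∈ θ, pol (p : α × α).1 = pol p.2
  sym_id : ∀ x : Set α, ConfigOf le conflict x → {p : α × α | p.1 ∈ x ∧ p.2 = p.1} ∈ Sym
  sym_inv : ∀ θ ∈ Sym, Prod.swap '' θ ∈ Sym
  sym_comp : ∀ θ ∈ Sym, ∀ θ' ∈ Sym, symCod θ = symDom θ' →
    {p : α × α | ∃ b, (p.1, b) ∈ θ ∧ (b, p.2) ∈ θ'} ∈ Sym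
  sym_restrict : ∀ θ ∈ Sym, ∀ x : Set α, ConfigOf le conflict x → x ⊆ symDom θ →
    ∃ θ' ∈ Sym, θ' ⊆ θ ∧ symDom θ' = x
  sym_ext : ∀ θ ∈ Sym, ∀ x : Set α, ConfigOf le conflict x → symDom θ ⊆ x →
    ∃ θ' ∈ Sym, θ ⊆ θ' ∧ symDom θ' = x

/-- An alternating play: valid, non-repetitive, alternating, negative start. -/
def AltPlayOf {α : Type} (le conflict : α → α → Prop) (pol : α → Bool) (s : List α) : Prop :=
  (∀ t, t <+: s → ConfigOf le conflict {a | a ∈ t}) ∧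
  s.Nodup ∧
  (∀ (i : ℕ) (a b : α), s[i]? = some a → s[i + 1]? = some b → pol a ≠ pol b) ∧
  (∀ a : α, s[0]? = some a → pol a = false)

/-- The pointwise pairing of the length-`k` prefixes of two sequences. -/
def pairingUpTo {α : Type} (s t : List α) (k : ℕ) : Set (α × α) :=
  {p | ∃ i < k, s[i]? = some p.1 ∧ t[i]? = some p.2}

/-- Two plays are symmetric when they have the same length and the pointwise
pairing of each pair of prefixes is a symmetry. -/
def PlaySymOf {α : Type} (Sym : Set (Set (α × α))) (s t : List α) : Prop :=
  s.length = t.length ∧ ∀ k ≤ s.length, pairingUpTo s t k ∈ Sym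

/-- A meager arena: a forestial alternating partial order with polarities,
without conflict or symmetry. -/
structure Meager (β : Type) where
  le : β → β → Prop
  pol : β → Bool
  le_refl : ∀ e, le e e
  le_trans : ∀ {a b c : β}, le a b → le b c → le a c
  le_antisymm : ∀ {a b : β}, le a b → le b a → a = b
  alternating : ∀ {a b : β}, immOf le a b → pol a ≠ pol b
  forestial : ∀ {a1 a2 a : β}, le a1 a → le a2 a → le a1 a2 ∨ le a2 a1

/-- A concrete arena `(A, A⁰, lbl)`: an arena with symmetry `A`, a meager arena
`M = A⁰`, and a polarity-preserving label function which is rigid (preserves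
minimality and immediate causality), locally pointed, and transparent (a bijection
between configurations is a symmetry iff it is an order-isomorphism preserving
labels). -/
structure Concrete (α β : Type) where
  A : ArenaS α
  M : Meager β
  lbl : α → β
  lbl_pol : ∀ a : α, M.pol (lbl a) = A.pol a
  locally_pointed : ∀ x : Set α, ConfigOf A.le A.conflict x → ∀ a ∈ x, ∀ a' ∈ x,
      MinimalOf A.le a → MinimalOf A.le a' → A.pol a = A.pol a' → a = a'
  rigid_min : ∀ a : α, MinimalOf A.le a → MinimalOf M.le (lbl a)
  rigid_imm : ∀ a b : α, immOf A.le a b → immOf M.le (lbl a) (lbl b)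
  transparent : ∀ θ : Set (α × α), IsBijGraph θ →
      ConfigOf A.le A.conflict (symDom θ) → ConfigOf A.le A.conflict (symCod θ) →
      (θ ∈ A.Sym ↔
        ((∀ p ∈ θ, ∀ q ∈ θ, (A.le (p : α × α).1 (q : α × α).1 ↔ A.le p.2 q.2)) ∧
          ∀ p ∈ θ, lbl (p : α × α).1 = lbl p.2))

-- The pointer annotation obtained from the arena's immediate causality: `ptrOf le
-- s j` is an index `i < j` carrying the immediate causal predecessor of `s_j`
-- (when one exists).
open Classical in
noncomputable def ptrOf {α : Type} (le : α → α → Prop) (s : List α) (j : ℕ) : ℕ :=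
  if h : ∃ i, i < j ∧ ∃ a b, s[i]? = some a ∧ s[j]? = some b ∧ immOf le a b then
    h.choose
  else 0

/-- Two plays have the same image under the pointer collapse `𝒫`: equal label
sequences, and equal pointers at every non-minimal occurrence. -/
def PImageEq {α β : Type} (C : Concrete α β) (s t : List α) : Prop :=
  s.map C.lbl = t.map C.lbl ∧
  ∀ (j : ℕ) (a : α), s[j]? = some a → ¬ MinimalOf C.A.le a →
    ptrOf C.A.le s j = ptrOf C.A.le t j

-- ===================== auxiliary lemmas =====================

lemma getElem?_some_lt' {α : Type} {s : List α} {i : ℕ} {a : α}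
    (h : s[i]? = some a) : i < s.length := by
  by_contra hc
  rw [List.getElem?_eq_none (le_of_not_gt hc)] at h
  cases h

private lemma dite_choose_congr' (P Q : ℕ → Prop)
    (i1 : Decidable (∃ i, P i)) (i2 : Decidable (∃ i, Q i)) (h : P = Q) :
    (@dite ℕ (∃ i, P i) i1 (fun h => h.choose) fun _ => 0) =
    (@dite ℕ (∃ i, Q i) i2 (fun h => h.choose) fun _ => 0) := by
  subst h
  have h12 : i1 = i2 := Subsingleton.elim _ _
  subst h12
  rfl

lemma ptrOf_congr' {α : Type} (le : α → α → Prop) (s t : List α) (j : ℕ)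
    (h : ∀ i ≤ j, s[i]? = t[i]?) : ptrOf le s j = ptrOf le t j := by
  unfold ptrOf
  exact dite_choose_congr' _ _ _ _ (funext fun i => propext (by
    constructor
    · rintro ⟨hi, a, b, h1, h2, h3⟩
      exact ⟨hi, a, b, ((h i hi.le).symm.trans h1), ((h j le_rfl).symm.trans h2), h3⟩
    · rintro ⟨hi, a, b, h1, h2, h3⟩
      exact ⟨hi, a, b, ((h i hi.le).trans h1), ((h j le_rfl).trans h2), h3⟩))

lemma exists_maximal_rel' {α : Type} (le : α → α → Prop)
    (htrans : ∀ {a b c : α}, le a b → le b c → le a c)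
    (hanti : ∀ {a b : α}, le a b → le b a → a = b) :
    ∀ F : Finset α, F.Nonempty → ∃ m ∈ F, ∀ c ∈ F, le m c → c = m := by
  classical
  intro F
  induction F using Finset.strongInduction with
  | _ F ih =>
    rintro ⟨a, ha⟩
    by_cases h : ∃ c ∈ F, le a c ∧ c ≠ a
    · obtain ⟨c0, hc0F, hc0⟩ := h
      have hss : F.filter (fun c => le a c ∧ c ≠ a) ⊂ F := by
        refine ⟨Finset.filter_subset _ _, fun hsub => ?_⟩
        have := Finset.mem_filter.mp (hsub ha)
        exact this.2.2 rfl
      obtain ⟨m, hmF, hmax⟩ := ih _ hss ⟨c0, Finset.mem_filter.mpr ⟨hc0F, hc0⟩⟩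
      obtain ⟨hmF', ham, hma⟩ := Finset.mem_filter.mp hmF
      refine ⟨m, hmF', fun c hc hmc => ?_⟩
      by_cases hca : c = a
      · subst hca
        exact absurd (hanti hmc ham) hma
      · exact hmax c (Finset.mem_filter.mpr ⟨hc, htrans ham hmc, hca⟩) hmc
    · refine ⟨a, ha, fun c hc hac => ?_⟩
      by_contra hne'
      exact h ⟨c, hc, hac, hne'⟩

lemma exists_imm_pred' {α : Type} (A : ArenaS α) {a : α} (h : ¬ MinimalOf A.le a) :
    ∃ p, immOf A.le p a := by
  classical
  have hne : ∃ e, A.le e a ∧ e ≠ a := by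
    unfold MinimalOf at h
    push_neg at h
    exact h
  have hfin : {e | A.le e a ∧ e ≠ a}.Finite := (A.finite_causes a).subset fun e he => he.1
  obtain ⟨e0, he0⟩ := hne
  obtain ⟨m, hmF, hmax⟩ := exists_maximal_rel' A.le A.le_trans A.le_antisymm hfin.toFinset
      ⟨e0, hfin.mem_toFinset.mpr he0⟩
  rw [Set.Finite.mem_toFinset] at hmF
  refine ⟨m, hmF.1, hmF.2, fun c hmc hca => ?_⟩
  by_cases hc : c = a
  · right; exact hc
  · left; exact hmax c (hfin.mem_toFinset.mpr ⟨hca, hc⟩) hmc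

lemma imm_pred_unique' {α : Type} (A : ArenaS α) {p q a : α}
    (hp : immOf A.le p a) (hq : immOf A.le q a) : p = q := by
  rcases A.forestial hp.1 hq.1 with h | h
  · rcases hp.2.2 q h hq.1 with h' | h'
    · exact h'.symm
    · exact absurd h' hq.2.1
  · rcases hq.2.2 p h hp.1 with h' | h'
    · exact h'
    · exact absurd h' hp.2.1

lemma mem_take_iff' {α : Type} (s : List α) (k : ℕ) (a : α) :
    a ∈ s.take k ↔ ∃ i < k, s[i]? = some a := by
  constructor
  · intro h
    obtain ⟨i, hi⟩ := List.mem_iff_getElem?.mp h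
    have hlt : i < (s.take k).length := getElem?_some_lt' hi
    rw [List.length_take] at hlt
    have hik : i < k := lt_of_lt_of_le hlt inf_le_left
    rw [List.getElem?_take, if_pos hik] at hi
    exact ⟨i, hik, hi⟩
  · rintro ⟨i, hik, hi⟩
    apply List.mem_iff_getElem?.mpr
    exact ⟨i, by rw [List.getElem?_take, if_pos hik]; exact hi⟩

lemma index_of_le' {α : Type} (A : ArenaS α) {s : List α}
    (hs : AltPlayOf A.le A.conflict A.pol s) {j : ℕ} {a a' : α}
    (hj : s[j]? = some a) (hle : A.le a' a) : ∃ i ≤ j, s[i]? = some a' := by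
  have hcfg := hs.1 (s.take (j+1)) (List.take_prefix _ _)
  have hmem : a ∈ s.take (j+1) := (mem_take_iff' s (j+1) a).mpr ⟨j, Nat.lt_succ_self j, hj⟩
  have hmem' : a' ∈ s.take (j+1) := hcfg.2.1 a hmem a' hle
  obtain ⟨i, hik, hi⟩ := (mem_take_iff' s (j+1) a').mp hmem'
  exact ⟨i, Nat.lt_succ_iff.mp hik, hi⟩

lemma ptr_spec' {α : Type} (A : ArenaS α) {s : List α}
    (hs : AltPlayOf A.le A.conflict A.pol s) {j : ℕ} {a : α}
    (hj : s[j]? = some a) (hmin : ¬ MinimalOf A.le a) :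
    ptrOf A.le s j < j ∧
      (∃ a', s[ptrOf A.le s j]? = some a' ∧ immOf A.le a' a) ∧
      ∀ i < j, ∀ b, s[i]? = some b → immOf A.le b a → i = ptrOf A.le s j := by
  obtain ⟨p, hp⟩ := exists_imm_pred' A hmin
  obtain ⟨i, hij, hi⟩ := index_of_le' A hs hj hp.1
  have hinej : i ≠ j := by
    intro h
    subst h
    exact hp.2.1 (Option.some.inj (hi.symm.trans hj))
  have hex : ∃ i, i < j ∧ ∃ a0 b, s[i]? = some a0 ∧ s[j]? = some b ∧ immOf A.le a0 b :=
    ⟨i, lt_of_le_of_ne hij hinej, p, a, hi, hj, hp⟩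
  have heq : ptrOf A.le s j = hex.choose := by unfold ptrOf; rw [dif_pos hex]
  obtain ⟨hcj, a0, b, h1, h2, h3⟩ := hex.choose_spec
  have hba : b = a := Option.some.inj (h2.symm.trans hj)
  subst hba
  rw [heq]
  refine ⟨hcj, ⟨a0, h1, h3⟩, ?_⟩
  intro i' hi' b' hb' himm'
  have hb0 : b' = a0 := imm_pred_unique' A himm' h3
  subst hb0
  exact (List.getElem?_inj (lt_trans hi' (getElem?_some_lt' hj)) hs.2.1).mp (hb'.trans h1.symm)

lemma notMin_lbl' {α β : Type} (C : Concrete α β) {a : α}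
    (h : ¬ MinimalOf C.A.le a) : ¬ MinimalOf C.M.le (C.lbl a) := by
  obtain ⟨p, hp⟩ := exists_imm_pred' C.A h
  have himm := C.rigid_imm p a hp
  intro hm
  exact himm.2.1 (hm _ himm.1)

lemma lbl_eq_of_map' {α β : Type} (C : Concrete α β) {s t : List α}
    (hmap : s.map C.lbl = t.map C.lbl) :
    ∀ (i : ℕ) (a a₂ : α), s[i]? = some a → t[i]? = some a₂ → C.lbl a = C.lbl a₂ := by
  intro i a a₂ h1 h2
  have h := congrArg (fun l => l[i]?) hmap
  simp only [List.getElem?_map, h1, h2, Option.map_some] at h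
  exact Option.some.inj h

lemma le_transfer' {α β : Type} (C : Concrete α β) {s t : List α}
    (hs : AltPlayOf C.A.le C.A.conflict C.A.pol s)
    (ht : AltPlayOf C.A.le C.A.conflict C.A.pol t)
    (hmap : s.map C.lbl = t.map C.lbl)
    (hptr : ∀ (j : ℕ) (a : α), s[j]? = some a → ¬ MinimalOf C.A.le a →
      ptrOf C.A.le s j = ptrOf C.A.le t j) :
    ∀ (j i : ℕ) (a b a₂ b₂ : α), s[i]? = some a → s[j]? = some b →
      t[i]? = some a₂ → t[j]? = some b₂ → C.A.le a b → C.A.le a₂ b₂ := by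
  intro j
  induction j using Nat.strong_induction_on with
  | _ j ih =>
    intro i a b a₂ b₂ ha hb ha₂ hb₂ hab
    by_cases heq : a = b
    · subst heq
      have hij : i = j := (List.getElem?_inj (getElem?_some_lt' ha) hs.2.1).mp (ha.trans hb.symm)
      subst hij
      have : a₂ = b₂ := Option.some.inj (ha₂.symm.trans hb₂)
      subst this
      exact C.A.le_refl a₂
    · have hbmin : ¬ MinimalOf C.A.le b := fun hm => heq (hm a hab)
      have hb₂min : ¬ MinimalOf C.A.le b₂ := by
        intro hm
        have h1 := C.rigid_min b₂ hm
        rw [← lbl_eq_of_map' C hmap j b b₂ hb hb₂] at h1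
        exact notMin_lbl' C hbmin h1
      obtain ⟨hlt, ⟨p, hpval, hpimm⟩, _⟩ := ptr_spec' C.A hs hb hbmin
      obtain ⟨hlt₂, ⟨q, hqval, hqimm⟩, _⟩ := ptr_spec' C.A ht hb₂ hb₂min
      have hpe : ptrOf C.A.le s j = ptrOf C.A.le t j := hptr j b hb hbmin
      rw [← hpe] at hqval
      have hap : C.A.le a p := by
        rcases C.A.forestial hab hpimm.1 with h | h
        · exact h
        · rcases hpimm.2.2 a h hab with h' | h'
          · rw [h']; exact C.A.le_refl p
          · exact absurd h' heq
      have := ih (ptrOf C.A.le s j) hlt i a p a₂ q ha hpval ha₂ hqval hap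
      exact C.A.le_trans this hqimm.1

lemma symDom_pairing' {α : Type} (s t : List α) (k : ℕ)
    (hk : k ≤ s.length) (hlen : s.length = t.length) :
    symDom (pairingUpTo s t k) = {a | a ∈ s.take k} := by
  ext a
  simp only [symDom, Set.mem_image, pairingUpTo, Set.mem_setOf_eq, mem_take_iff']
  constructor
  · rintro ⟨⟨x, y⟩, ⟨i, hik, h1, h2⟩, rfl⟩
    exact ⟨i, hik, h1⟩
  · rintro ⟨i, hik, hi⟩
    have hit : i < t.length := by omega
    exact ⟨(a, t[i]), ⟨i, hik, hi, List.getElem?_eq_getElem hit⟩, rfl⟩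

lemma symCod_pairing' {α : Type} (s t : List α) (k : ℕ)
    (hk : k ≤ s.length) (hlen : s.length = t.length) :
    symCod (pairingUpTo s t k) = {a | a ∈ t.take k} := by
  ext a
  simp only [symCod, Set.mem_image, pairingUpTo, Set.mem_setOf_eq, mem_take_iff']
  constructor
  · rintro ⟨⟨x, y⟩, ⟨i, hik, h1, h2⟩, rfl⟩
    exact ⟨i, hik, h2⟩
  · rintro ⟨i, hik, hi⟩
    have his : i < s.length := by omega
    exact ⟨(s[i], a), ⟨i, hik, List.getElem?_eq_getElem his, hi⟩, rfl⟩

/-- For a concrete arena, the function `𝒫` mapping (symmetry classes of)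
alternating plays on `A` to alternating plays with pointers on the meager arena
`A⁰` is well-defined (symmetric plays have the same image, and the image is a
play with pointers on `A⁰`), injective, and preserves length and prefix. -/
theorem pointer_collapse_wellDefined_injective {α β : Type} (C : Concrete α β) :
    -- well-defined on symmetry classes
    (∀ s t : List α, AltPlayOf C.A.le C.A.conflict C.A.pol s →
        AltPlayOf C.A.le C.A.conflict C.A.pol t →
        PlaySymOf C.A.Sym s t → PImageEq C s t) ∧
    -- the image is an alternating play with pointers on the meager arena A⁰
    (∀ s : List α, AltPlayOf C.A.le C.A.conflict C.A.pol s →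
        ((∀ (i : ℕ) (a b : β), (s.map C.lbl)[i]? = some a →
            (s.map C.lbl)[i + 1]? = some b → C.M.pol a ≠ C.M.pol b) ∧
         (∀ a : β, (s.map C.lbl)[0]? = some a → C.M.pol a = false) ∧
         (∀ (j : ℕ) (b : β), (s.map C.lbl)[j]? = some b → ¬ MinimalOf C.M.le b →
            ptrOf C.A.le s j < j ∧
              ∃ b' : β, (s.map C.lbl)[ptrOf C.A.le s j]? = some b' ∧ immOf C.M.le b' b))) ∧
    -- injectivity on symmetry classes
    (∀ s t : List α, AltPlayOf C.A.le C.A.conflict C.A.pol s →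
        AltPlayOf C.A.le C.A.conflict C.A.pol t →
        PImageEq C s t → PlaySymOf C.A.Sym s t) ∧
    -- preserves length
    (∀ s : List α, (s.map C.lbl).length = s.length) ∧
    -- preserves prefix
    (∀ s t : List α, AltPlayOf C.A.le C.A.conflict C.A.pol t → s <+: t →
        (s.map C.lbl <+: t.map C.lbl ∧
          ∀ (j : ℕ) (a : α), s[j]? = some a → ¬ MinimalOf C.A.le a →
            ptrOf C.A.le s j = ptrOf C.A.le t j)) := by
  refine ⟨?_, ?_, ?_, ?_, ?_⟩
  -- Part 1: well-defined on symmetry classes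
  · intro s t hs ht hsym
    obtain ⟨hlen, hmem⟩ := hsym
    have hθSym : pairingUpTo s t s.length ∈ C.A.Sym := hmem s.length le_rfl
    have hbij := C.A.sym_graph _ hθSym
    obtain ⟨hiso, hlblθ⟩ := (C.transparent _ hbij (C.A.sym_dom _ hθSym)
      (C.A.sym_cod _ hθSym)).mp hθSym
    have hpair : ∀ (i : ℕ) (a b : α), s[i]? = some a → t[i]? = some b →
        (a, b) ∈ pairingUpTo s t s.length := by
      intro i a b h1 h2
      exact ⟨i, getElem?_some_lt' h1, h1, h2⟩
    constructor
    · apply List.ext_getElem?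
      intro i
      rw [List.getElem?_map, List.getElem?_map]
      by_cases hi : i < s.length
      · have h1 : s[i]? = some s[i] := List.getElem?_eq_getElem hi
        have h2 : t[i]? = some t[i] := List.getElem?_eq_getElem (by omega)
        rw [h1, h2, Option.map_some, Option.map_some]
        exact congrArg some (hlblθ (s[i], t[i]) (hpair i _ _ h1 h2))
      · rw [List.getElem?_eq_none (le_of_not_gt hi), List.getElem?_eq_none (by omega)]
    · intro j a hj hmin
      have hjlen : j < s.length := getElem?_some_lt' hj
      have hjt : t[j]? = some t[j] := List.getElem?_eq_getElem (by omega)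
      have hpairj : (a, t[j]) ∈ pairingUpTo s t s.length := hpair j a t[j] hj hjt
      have hlbleq : C.lbl a = C.lbl t[j] := hlblθ _ hpairj
      have hmin₂ : ¬ MinimalOf C.A.le t[j] := by
        intro hm
        have h1 := C.rigid_min _ hm
        rw [← hlbleq] at h1
        exact notMin_lbl' C hmin h1
      obtain ⟨hlt, ⟨p, hp1, hp2⟩, _⟩ := ptr_spec' C.A hs hj hmin
      obtain ⟨hlt₂, ⟨q, hq1, hq2⟩, huniq₂⟩ := ptr_spec' C.A ht hjt hmin₂
      have hmlen : ptrOf C.A.le s j < s.length := lt_trans hlt hjlen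
      have htm : t[ptrOf C.A.le s j]? = some t[ptrOf C.A.le s j] :=
        List.getElem?_eq_getElem (by omega)
      have hpairm : (p, t[ptrOf C.A.le s j]) ∈ pairingUpTo s t s.length :=
        hpair _ p _ hp1 htm
      have himm : immOf C.A.le t[ptrOf C.A.le s j] t[j] := by
        refine ⟨(hiso _ hpairm _ hpairj).mp hp2.1, ?_, ?_⟩
        · intro he
          exact hp2.2.1 ((hbij _ hpairm _ hpairj).mpr he)
        · intro c hc1 hc2
          have hcodcfg := C.A.sym_cod _ hθSym
          have htjmem : t[j] ∈ symCod (pairingUpTo s t s.length) := ⟨(a, t[j]), hpairj, rfl⟩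
          have hcmem : c ∈ symCod (pairingUpTo s t s.length) := hcodcfg.2.1 _ htjmem c hc2
          obtain ⟨⟨x, y⟩, hxyθ, hy⟩ := hcmem
          have hy' : y = c := hy
          subst hy'
          have hx1 : C.A.le p x := (hiso _ hpairm _ hxyθ).mpr hc1
          have hx2 : C.A.le x a := (hiso _ hxyθ _ hpairj).mpr hc2
          rcases hp2.2.2 x hx1 hx2 with h' | h'
          · left; exact ((hbij _ hxyθ _ hpairm).mp h')
          · right; exact ((hbij _ hxyθ _ hpairj).mp h')
      exact huniq₂ _ hlt _ htm himm
  -- Part 2: image is an alternating play with pointers on the meager arena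
  · intro s hs
    refine ⟨?_, ?_, ?_⟩
    · intro i a b ha hb
      rw [List.getElem?_map] at ha hb
      obtain ⟨x, hx, rfl⟩ := Option.map_eq_some_iff.mp ha
      obtain ⟨y, hy, rfl⟩ := Option.map_eq_some_iff.mp hb
      rw [C.lbl_pol, C.lbl_pol]
      exact hs.2.2.1 i x y hx hy
    · intro a ha
      rw [List.getElem?_map] at ha
      obtain ⟨x, hx, rfl⟩ := Option.map_eq_some_iff.mp ha
      rw [C.lbl_pol]
      exact hs.2.2.2 x hx
    · intro j b hj hbmin
      rw [List.getElem?_map] at hj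
      obtain ⟨x, hx, rfl⟩ := Option.map_eq_some_iff.mp hj
      have hxmin : ¬ MinimalOf C.A.le x := fun hm => hbmin (C.rigid_min x hm)
      obtain ⟨hlt, ⟨p, hp1, hp2⟩, _⟩ := ptr_spec' C.A hs hx hxmin
      refine ⟨hlt, C.lbl p, ?_, C.rigid_imm p x hp2⟩
      rw [List.getElem?_map, hp1, Option.map_some]
  -- Part 3: injectivity on symmetry classes
  · intro s t hs ht himg
    obtain ⟨hmap, hptr⟩ := himg
    have hlen : s.length = t.length := by
      have := congrArg List.length hmap
      simpa using this
    have hptr' : ∀ (j : ℕ) (a₂ : α), t[j]? = some a₂ → ¬ MinimalOf C.A.le a₂ →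
        ptrOf C.A.le t j = ptrOf C.A.le s j := by
      intro j a₂ hj hmin
      have hjlen : j < s.length := by have := getElem?_some_lt' hj; omega
      have hsj : s[j]? = some s[j] := List.getElem?_eq_getElem hjlen
      have hamin : ¬ MinimalOf C.A.le s[j] := by
        intro hm
        have h1 := C.rigid_min _ hm
        rw [lbl_eq_of_map' C hmap j s[j] a₂ hsj hj] at h1
        exact notMin_lbl' C hmin h1
      exact (hptr j s[j] hsj hamin).symm
    have hle1 := le_transfer' C hs ht hmap hptr
    have hle2 := le_transfer' C ht hs hmap.symm hptr'
    refine ⟨hlen, ?_⟩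
    intro k hk
    have hbij : IsBijGraph (pairingUpTo s t k) := by
      rintro ⟨x, y⟩ hp ⟨x', y'⟩ hq
      obtain ⟨i, hik, h1, h2⟩ := hp
      obtain ⟨i', hik', h1', h2'⟩ := hq
      constructor
      · intro hxx
        have hxx' : x = x' := hxx
        subst hxx'
        have hii : i = i' := (List.getElem?_inj (getElem?_some_lt' h1) hs.2.1).mp
          (h1.trans h1'.symm)
        subst hii
        show y = y'
        exact Option.some.inj (h2.symm.trans h2')
      · intro hyy
        have hyy' : y = y' := hyy
        subst hyy'
        have hii : i = i' := (List.getElem?_inj (getElem?_some_lt' h2) ht.2.1).mp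
          (h2.trans h2'.symm)
        subst hii
        show x = x'
        exact Option.some.inj (h1.symm.trans h1')
    have hdomc : ConfigOf C.A.le C.A.conflict (symDom (pairingUpTo s t k)) := by
      rw [symDom_pairing' s t k hk hlen]
      exact hs.1 (s.take k) (List.take_prefix _ _)
    have hcodc : ConfigOf C.A.le C.A.conflict (symCod (pairingUpTo s t k)) := by
      rw [symCod_pairing' s t k hk hlen]
      exact ht.1 (t.take k) (List.take_prefix _ _)
    apply (C.transparent _ hbij hdomc hcodc).mpr
    constructor
    · rintro ⟨x, y⟩ hp ⟨x', y'⟩ hq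
      obtain ⟨i, hik, h1, h2⟩ := hp
      obtain ⟨i', hik', h1', h2'⟩ := hq
      constructor
      · intro h
        exact hle1 i' i x x' y y' h1 h1' h2 h2' h
      · intro h
        exact hle2 i' i y y' x x' h2 h2' h1 h1' h
    · rintro ⟨x, y⟩ hp
      obtain ⟨i, hik, h1, h2⟩ := hp
      exact lbl_eq_of_map' C hmap i x y h1 h2
  -- Part 4: preserves length
  · intro s
    exact List.length_map C.lbl
  -- Part 5: preserves prefix
  · intro s t ht hpre
    refine ⟨hpre.map C.lbl, ?_⟩
    intro j a hj hmin
    apply ptrOf_congr'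
    intro i hi
    have hjlen : j < s.length := getElem?_some_lt' hj
    obtain ⟨r, rfl⟩ := hpre
    rw [List.getElem?_append, if_pos (by omega : i < s.length)]
end

section
/- Every complete alternating play (well-bracketed in the weak non-alternating sense, P-visible, O-visible, with every question answered) is well-bracketed in the strong sense: every answer answers the pending question at the time it is played. -/
set_option autoImplicit false

/-- An arena with a Question/Answer labeling (`qa a = true` means `a` is a
Question): questions open (minimal events are questions), answers close (answers
are maximal), and distinct answers to the same question are in conflict. -/
structure QArena (α : Type) where
  le : α → α → Prop
  conflict : α → α → Prop
  pol : α → Bool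
  qa : α → Bool
  le_refl : ∀ e, le e e
  le_trans : ∀ {a b c : α}, le a b → le b c → le a c
  le_antisymm : ∀ {a b : α}, le a b → le b a → a = b
  finite_causes : ∀ e : α, Set.Finite {e' | le e' e}
  conflict_irrefl : ∀ e, ¬ conflict e e
  conflict_symm : ∀ {a b : α}, conflict a b → conflict b a
  conflict_inherit : ∀ {a b b' : α}, conflict a b → le b b' → conflict a b'
  alternating : ∀ {a b : α}, immOf le a b → pol a ≠ pol b
  forestial : ∀ {a1 a2 a : α}, le a1 a → le a2 a → le a1 a2 ∨ le a2 a1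
  race_free : ∀ {a1 a2 : α}, conflict a1 a2 →
    (∀ a1' a2', le a1' a1 → le a2' a2 → conflict a1' a2' → a1' = a1 ∧ a2' = a2) →
    pol a1 = pol a2
  question_opening : ∀ a : α, MinimalOf le a → qa a = true
  answer_closing : ∀ a : α, qa a = false → ∀ b, le a b → b = a
  answer_linear : ∀ q a1 a2 : α, qa a1 = false → qa a2 = false →
    immOf le q a1 → immOf le q a2 → a1 = a2 ∨ conflict a1 a2

/-- The P-view relation: `PViewRelOf le pol s v` holds when `v = ⌈s⌉`, following
the inductive clauses `⌈ε⌉ = ε`, `⌈s a⁺⌉ = ⌈s⌉ a⁺`, `⌈s a1⁺ s' a2⁻⌉ = ⌈s⌉ a1 a2`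
when `a1 ⋗ a2`, and `⌈t a2⁻⌉ = a2` when `a2` is negative minimal. -/
inductive PViewRelOf {α : Type} (le : α → α → Prop) (pol : α → Bool) :
    List α → List α → Prop
  | nil : PViewRelOf le pol [] []
  | pos {s v : List α} {a : α} : pol a = true → PViewRelOf le pol s v →
      PViewRelOf le pol (s ++ [a]) (v ++ [a])
  | negMin {t : List α} {a : α} : pol a = false → MinimalOf le a →
      PViewRelOf le pol (t ++ [a]) [a]
  | neg {s s' v : List α} {a1 a2 : α} : pol a1 = true → pol a2 = false →
      immOf le a1 a2 → PViewRelOf le pol (s ++ [a1]) v →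
      PViewRelOf le pol (s ++ a1 :: s' ++ [a2]) (v ++ [a2])

/-- The O-view relation, dual to the P-view: Opponent moves extend the view and
positive moves reset it to their justifier's view. -/
inductive OViewRelOf {α : Type} (le : α → α → Prop) (pol : α → Bool) :
    List α → List α → Prop
  | nil : OViewRelOf le pol [] []
  | neg {s v : List α} {a : α} : pol a = false → OViewRelOf le pol s v →
      OViewRelOf le pol (s ++ [a]) (v ++ [a])
  | pos {s s' v : List α} {a1 a2 : α} : pol a1 = false → pol a2 = true →
      immOf le a1 a2 → OViewRelOf le pol (s ++ [a1]) v →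
      OViewRelOf le pol (s ++ a1 :: s' ++ [a2]) (v ++ [a2])

/-- `a` answers question `q`: `a` is an answer whose justifier (immediate causal
predecessor in the arena) is `q`. -/
def AnswersOf {α : Type} (le : α → α → Prop) (qa : α → Bool) (q a : α) : Prop :=
  qa a = false ∧ immOf le q a

/-- Question `q` is answered within the sequence `t`. -/
def AnsweredIn {α : Type} (le : α → α → Prop) (qa : α → Bool) (q : α) (t : List α) :
    Prop :=
  ∃ a ∈ t, AnswersOf le qa q a

/-- `q` is the pending question of `t`: the last question occurrence of `t` that is
unanswered in `t`. -/
def PendingIn {α : Type} (le : α → α → Prop) (qa : α → Bool) (t : List α) (q : α) :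
    Prop :=
  ∃ i : ℕ, t[i]? = some q ∧ qa q = true ∧ ¬ AnsweredIn le qa q t ∧
    ∀ (j : ℕ) (q' : α), i < j → t[j]? = some q' → qa q' = true → AnsweredIn le qa q' t

/-- Strong (alternating) well-bracketing of a play: every answer answers the
pending question at the time it is played. -/
def WBPlayOf {α : Type} (le : α → α → Prop) (qa : α → Bool) (s : List α) : Prop :=
  ∀ (t : List α) (a : α), t ++ [a] <+: s → qa a = false →
    ∃ q, PendingIn le qa t q ∧ immOf le q a

/-- A well-bracketed strategy: it is never the first to break the call-stack
discipline (every positive extension of a well-bracketed play is well-bracketed). -/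
def WBStrategyOf {α : Type} (le : α → α → Prop) (qa : α → Bool) (pol : α → Bool)
    (σ : Set (List α)) : Prop :=
  ∀ (s : List α) (a : α), pol a = true → s ++ [a] ∈ σ →
    WBPlayOf le qa s → WBPlayOf le qa (s ++ [a])

/-- Weak (non-alternating) well-bracketing of a play, via the `fork` and `wait`
conditions: a question may justify a move only while unanswered (`fork`), and it
may only be answered once all the questions it justified are answered (`wait`). -/
def WeakWBOf {α : Type} (le : α → α → Prop) (qa : α → Bool) (s : List α) : Prop :=
  (∀ (t : List α) (m : α), t ++ [m] <+: s → ∀ q ∈ t, qa q = true → immOf le q m →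
      ¬ AnsweredIn le qa q t) ∧
  (∀ (t : List α) (a : α), t ++ [a] <+: s → qa a = false → ∀ q : α, immOf le q a →
      ∀ q' ∈ t, qa q' = true → immOf le q q' → AnsweredIn le qa q' t)

section Aux
variable {α : Type}

lemma prefix_getElem? {u s : List α} (h : u <+: s) {i : ℕ} (hi : i < u.length) :
    s[i]? = u[i]? := by
  obtain ⟨r, rfl⟩ := h
  rw [List.getElem?_append]
  simp [hi]

lemma nodup_index_unique {s : List α} (hnd : s.Nodup) {i j : ℕ} {x : α}
    (hi : s[i]? = some x) (hj : s[j]? = some x) : i = j := by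
  obtain ⟨hil, -⟩ := List.getElem?_eq_some_iff.1 hi
  exact (List.getElem?_inj hil hnd).1 (hi.trans hj.symm)

lemma prefix_concat_getElem? {w : List α} {x : α} {s : List α} (h : w ++ [x] <+: s) :
    s[w.length]? = some x := by
  rw [prefix_getElem? h (by simp)]
  exact List.getElem?_concat_length (l := w) (a := x)

lemma mem_index_lt {u s : List α} (hnd : s.Nodup) (h : u <+: s) {x : α}
    (hx : x ∈ u) {j : ℕ} (hj : s[j]? = some x) : j < u.length := by
  obtain ⟨i, hi⟩ := List.mem_iff_getElem?.1 hx
  have hil : i < u.length := (List.getElem?_eq_some_iff.1 hi).1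
  have : s[i]? = some x := by rw [prefix_getElem? h hil]; exact hi
  have := nodup_index_unique hnd this hj
  omega

lemma finsetMax (le : α → α → Prop) (hrefl : ∀ e, le e e)
    (htrans : ∀ {a b c : α}, le a b → le b c → le a c)
    (F : Finset α) (htot : ∀ x ∈ F, ∀ y ∈ F, le x y ∨ le y x) (hne : F.Nonempty) :
    ∃ m ∈ F, ∀ x ∈ F, le x m := by
  classical
  induction F using Finset.induction with
  | empty => exact absurd hne (by simp)
  | insert a F ha IH =>
    rcases F.eq_empty_or_nonempty with rfl | hne'
    · exact ⟨a, by simp, by intro x hx; simp at hx; subst hx; exact hrefl _⟩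
    · obtain ⟨m, hm, hmax⟩ := IH (fun x hx y hy =>
        htot x (by simp [hx]) y (by simp [hy])) hne'
      rcases htot a (by simp) m (by simp [hm]) with h | h
      · refine ⟨m, by simp [hm], ?_⟩
        intro x hx
        rcases Finset.mem_insert.1 hx with rfl | hx
        · exact h
        · exact hmax x hx
      · refine ⟨a, by simp, ?_⟩
        intro x hx
        rcases Finset.mem_insert.1 hx with rfl | hx
        · exact hrefl _
        · exact htrans (hmax x hx) h

end Aux

section Aux2
variable {α : Type}

lemma exists_justifier (Q : QArena α) {a : α} (hmin : ¬ MinimalOf Q.le a) :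
    ∃ q, immOf Q.le q a := by
  classical
  have hfin : Set.Finite {e' | Q.le e' a ∧ e' ≠ a} :=
    (Q.finite_causes a).subset (fun x hx => hx.1)
  obtain ⟨a', ha'1, ha'2⟩ : ∃ a', Q.le a' a ∧ a' ≠ a := by
    simp only [MinimalOf, not_forall] at hmin
    obtain ⟨a', h1, h2⟩ := hmin
    exact ⟨a', h1, h2⟩
  have hne : hfin.toFinset.Nonempty := ⟨a', by simp [Set.Finite.mem_toFinset]; exact ⟨ha'1, ha'2⟩⟩
  obtain ⟨m, hm, hmax⟩ := finsetMax Q.le Q.le_refl (fun h1 h2 => Q.le_trans h1 h2)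
    hfin.toFinset
    (fun x hx y hy => by
      simp [Set.Finite.mem_toFinset] at hx hy
      exact Q.forestial hx.1 hy.1) hne
  simp [Set.Finite.mem_toFinset] at hm
  refine ⟨m, hm.1, hm.2, ?_⟩
  intro c hmc hca
  by_cases hc : c = a
  · exact Or.inr hc
  · left
    have : Q.le c m := hmax c (by simp [Set.Finite.mem_toFinset]; exact ⟨hca, hc⟩)
    exact Q.le_antisymm this hmc

lemma justifier_unique (Q : QArena α) {q q' a : α}
    (h : immOf Q.le q a) (h' : immOf Q.le q' a) : q = q' := by
  rcases Q.forestial h.1 h'.1 with hle | hle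
  · rcases h.2.2 q' hle h'.1 with h1 | h1
    · exact h1.symm
    · exact absurd h1 h'.2.1
  · rcases h'.2.2 q hle h.1 with h1 | h1
    · exact h1
    · exact absurd h1 h.2.1

lemma pview_subset {le : α → α → Prop} {pol : α → Bool} {u v : List α}
    (h : PViewRelOf le pol u v) : ∀ x ∈ v, x ∈ u := by
  induction h with
  | nil => simp
  | pos hp hv ih =>
    intro x hx
    rcases List.mem_append.1 hx with h | h
    · exact List.mem_append.2 (Or.inl (ih x h))
    · simp at h; simp [h]
  | negMin hp hm =>
    intro x hx; simp at hx; simp [hx]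
  | neg hp1 hp2 himm hv ih =>
    intro x hx
    rcases List.mem_append.1 hx with h | h
    · have := ih x h
      simp at this ⊢
      tauto
    · simp at h; simp [h]

lemma oview_subset {le : α → α → Prop} {pol : α → Bool} {u v : List α}
    (h : OViewRelOf le pol u v) : ∀ x ∈ v, x ∈ u := by
  induction h with
  | nil => simp
  | neg hp hv ih =>
    intro x hx
    rcases List.mem_append.1 hx with h | h
    · exact List.mem_append.2 (Or.inl (ih x h))
    · simp at h; simp [h]
  | pos hp1 hp2 himm hv ih =>
    intro x hx
    rcases List.mem_append.1 hx with h | h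
    · have := ih x h
      simp at this ⊢
      tauto
    · simp at h; simp [h]

lemma views_total (Q : QArena α) (hneg : ∀ a : α, MinimalOf Q.le a → Q.pol a = false)
    (s : List α) (hconf : ∀ t, t <+: s → ConfigOf Q.le Q.conflict {a | a ∈ t}) :
    ∀ u, u <+: s →
      (∃ v, PViewRelOf Q.le Q.pol u v) ∧ (∃ v, OViewRelOf Q.le Q.pol u v) := by
  suffices H : ∀ n u, u.length = n → u <+: s →
      (∃ v, PViewRelOf Q.le Q.pol u v) ∧ (∃ v, OViewRelOf Q.le Q.pol u v) by
    intro u hu; exact H u.length u rfl hu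
  intro n
  induction n using Nat.strong_induction_on with
  | _ n IH =>
  intro u hlen hu
  rcases List.eq_nil_or_concat u with rfl | ⟨u', last, rfl⟩
  · exact ⟨⟨[], .nil⟩, ⟨[], .nil⟩⟩
  rw [List.concat_eq_append] at hu hlen ⊢
  have hu' : u' <+: s := (List.prefix_append u' [last]).trans hu
  have hjust : ¬ MinimalOf Q.le last → ∃ u0 s1 q1, u' = u0 ++ q1 :: s1 ∧
      immOf Q.le q1 last ∧ (u0 ++ [q1]) <+: s ∧ u0.length + 1 < n := by
    intro hmin
    obtain ⟨q1, hq1⟩ := exists_justifier Q hmin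
    have hq1mem : q1 ∈ u' := by
      have hc := (hconf _ hu).2.1 last (by simp) q1 hq1.1
      simp at hc
      rcases hc with h | h
      · exact h
      · exact absurd h hq1.2.1
    obtain ⟨u0, s1, rfl⟩ := List.append_of_mem hq1mem
    refine ⟨u0, s1, q1, rfl, hq1, ?_, ?_⟩
    · refine (List.IsPrefix.trans ⟨s1, by simp⟩ hu' : u0 ++ [q1] <+: s)
    · simp at hlen; omega
  constructor
  · by_cases hpol : Q.pol last = true
    · obtain ⟨v, hv⟩ := (IH u'.length (by simp at hlen; omega) u' rfl hu').1
      exact ⟨v ++ [last], .pos hpol hv⟩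
    · have hpol' : Q.pol last = false := by simpa using hpol
      by_cases hmin : MinimalOf Q.le last
      · exact ⟨[last], .negMin hpol' hmin⟩
      · obtain ⟨u0, s1, q1, rfl, hq1, hpre1, hlt1⟩ := hjust hmin
        have hq1pol : Q.pol q1 = true := by
          have := Q.alternating hq1; rw [hpol'] at this; simpa using this
        obtain ⟨v, hv⟩ := (IH (u0.length + 1) hlt1 (u0 ++ [q1]) (by simp) hpre1).1
        refine ⟨v ++ [last], ?_⟩
        have := PViewRelOf.neg (s' := s1) hq1pol hpol' hq1 hv
        simpa using this
  · by_cases hpol : Q.pol last = false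
    · obtain ⟨v, hv⟩ := (IH u'.length (by simp at hlen; omega) u' rfl hu').2
      exact ⟨v ++ [last], .neg hpol hv⟩
    · have hpol' : Q.pol last = true := by simpa using hpol
      have hmin : ¬ MinimalOf Q.le last := fun hm => by
        rw [hneg last hm] at hpol'; simp at hpol'
      obtain ⟨u0, s1, q1, rfl, hq1, hpre1, hlt1⟩ := hjust hmin
      have hq1pol : Q.pol q1 = false := by
        have := Q.alternating hq1; rw [hpol'] at this; simpa using this
      obtain ⟨v, hv⟩ := (IH (u0.length + 1) hlt1 (u0 ++ [q1]) (by simp) hpre1).2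
      refine ⟨v ++ [last], ?_⟩
      have := OViewRelOf.pos (s' := s1) hq1pol hpol' hq1 hv
      simpa using this

end Aux2


section Segment
variable {α : Type}

lemma segment_lemma (Q : QArena α)
    (hneg : ∀ a : α, MinimalOf Q.le a → Q.pol a = false)
    (s : List α)
    (hplay : AltPlayOf Q.le Q.conflict Q.pol s)
    (hP : ∀ t v : List α, t <+: s → PViewRelOf Q.le Q.pol t v →
        AltPlayOf Q.le Q.conflict Q.pol v)
    (hO : ∀ t v : List α, t <+: s → OViewRelOf Q.le Q.pol t v →
        AltPlayOf Q.le Q.conflict Q.pol v)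
    {iQ mA : ℕ} {q a : α}
    (hiQ : s[iQ]? = some q) (hmA : s[mA]? = some a) (hlt : iQ < mA)
    (himm : immOf Q.le q a) (hmax : ∀ x, ¬ immOf Q.le a x) :
    ∀ k x d j, mA < k → s[k]? = some x → immOf Q.le d x → s[j]? = some d →
      j ≤ iQ ∨ mA < j := by
  obtain ⟨hconf, hnd, halt, -⟩ := hplay
  have main : ∀ n : ℕ,
      (∀ k x d j, k + 1 = n → mA < k → s[k]? = some x → immOf Q.le d x →
        s[j]? = some d → j ≤ iQ ∨ mA < j) ∧
      (∀ u v, mA < n → (Q.pol a = false ∨ mA + 2 ≤ n) → u <+: s → u.length = n →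
        PViewRelOf Q.le Q.pol u v → ∀ x ∈ v, ∀ j, s[j]? = some x → j ≤ iQ ∨ mA ≤ j) ∧
      (∀ u v, mA < n → (Q.pol a = true ∨ mA + 2 ≤ n) → u <+: s → u.length = n →
        OViewRelOf Q.le Q.pol u v → ∀ x ∈ v, ∀ j, s[j]? = some x → j ≤ iQ ∨ mA ≤ j) := by
    intro n
    induction n using Nat.strong_induction_on with
    | _ n IH =>
    -- Part A
    have partA : ∀ k x d j, k + 1 = n → mA < k → s[k]? = some x → immOf Q.le d x →
        s[j]? = some d → j ≤ iQ ∨ mA < j := by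
      intro k x d j hkn hk hx hdx hdj
      have hklen : k < s.length := (List.getElem?_eq_some_iff.1 hx).1
      set u' := s.take k with hu'def
      have hu'p : u' <+: s := List.take_prefix _ _
      have hu'len : u'.length = k := by simp [hu'def]; omega
      have hupre : u' ++ [x] <+: s := by
        have he : u' ++ [x] = s.take (k + 1) := by
          rw [hu'def, List.take_succ, hx]; rfl
        rw [he]; exact List.take_prefix _ _
      have hexclude : ∀ res : j ≤ iQ ∨ mA ≤ j, j ≤ iQ ∨ mA < j := by
        intro res
        rcases res with h | h
        · exact Or.inl h
        · rcases Nat.eq_or_lt_of_le h with h' | h'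
          · exfalso
            have hda : d = a := by
              rw [h'] at hmA
              exact Option.some.inj (hdj.symm.trans hmA)
            exact hmax x (hda ▸ hdx)
          · exact Or.inr h'
      rcases Bool.eq_false_or_eq_true (Q.pol x) with hpol | hpol
      · -- x positive: use P-view
        obtain ⟨v, hv⟩ := (views_total Q hneg s hconf u' hu'p).1
        have hview : PViewRelOf Q.le Q.pol (u' ++ [x]) (v ++ [x]) := .pos hpol hv
        have hcfg := (hP (u' ++ [x]) (v ++ [x]) hupre hview).1 (v ++ [x]) (List.prefix_refl _)
        have hdmem : d ∈ v ++ [x] := hcfg.2.1 x (by simp) d hdx.1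
        have hdv : d ∈ v := by
          rcases List.mem_append.1 hdmem with h | h
          · exact h
          · simp at h; exact absurd h.symm hdx.2.1.symm
        have hside : Q.pol a = false ∨ mA + 2 ≤ k := by
          by_cases hkk : k = mA + 1
          · left
            have := halt mA a x hmA (by rw [← hkk]; exact hx)
            rw [hpol] at this
            simpa using this
          · right; omega
        apply hexclude
        exact (IH k (by omega)).2.1 u' v hk hside hu'p hu'len hv d hdv j hdj
      · -- x negative: use O-view
        obtain ⟨v, hv⟩ := (views_total Q hneg s hconf u' hu'p).2
        have hview : OViewRelOf Q.le Q.pol (u' ++ [x]) (v ++ [x]) := .neg hpol hv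
        have hcfg := (hO (u' ++ [x]) (v ++ [x]) hupre hview).1 (v ++ [x]) (List.prefix_refl _)
        have hdmem : d ∈ v ++ [x] := hcfg.2.1 x (by simp) d hdx.1
        have hdv : d ∈ v := by
          rcases List.mem_append.1 hdmem with h | h
          · exact h
          · simp at h; exact absurd h.symm hdx.2.1.symm
        have hside : Q.pol a = true ∨ mA + 2 ≤ k := by
          by_cases hkk : k = mA + 1
          · left
            have := halt mA a x hmA (by rw [← hkk]; exact hx)
            rw [hpol] at this
            simpa using this
          · right; omega
        apply hexclude
        exact (IH k (by omega)).2.2 u' v hk hside hu'p hu'len hv d hdv j hdj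
    refine ⟨partA, ?_, ?_⟩
    · -- P-view part
      intro u v hn hside hu hulen hview
      cases hview with
      | nil => simp at hulen; omega
      | @pos s0 v' a' hpol hv' =>
        intro x hx j hj
        have ha' : s[s0.length]? = some a' := prefix_concat_getElem? hu
        have hs0len : s0.length + 1 = n := by simpa using hulen
        rcases List.mem_append.1 hx with hx | hx
        · by_cases hnm : s0.length = mA
          · exfalso
            have haa : a' = a := by
              rw [hnm] at ha'
              exact Option.some.inj (ha'.symm.trans hmA)
            rcases hside with h | h
            · rw [haa, h] at hpol; simp at hpol
            · omega
          · have hlt' : mA < s0.length := by omega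
            have hside' : Q.pol a = false ∨ mA + 2 ≤ s0.length := by
              by_cases h1 : s0.length = mA + 1
              · left
                have := halt mA a a' hmA (by rw [← h1]; exact ha')
                rw [hpol] at this
                simpa using this
              · right; omega
            have hs0p : s0 <+: s := (List.prefix_append s0 [a']).trans hu
            exact (IH s0.length (by omega)).2.1 s0 v' hlt' hside' hs0p rfl hv' x hx j hj
        · simp at hx; subst hx
          right
          have : j = s0.length := nodup_index_unique hnd hj ha'
          omega
      | @negMin t0 a' hpol hmin =>
        intro x hx j hj
        simp at hx
        have ha' : s[t0.length]? = some a' := prefix_concat_getElem? hu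
        have : j = t0.length := nodup_index_unique hnd (hx ▸ hj) ha'
        have hs0len : t0.length + 1 = n := by simpa using hulen
        right; omega
      | @neg s0 s1 v' a1 a2 hp1 hp2 himm12 hv' =>
        intro x hx j hj
        have hureq : s0 ++ a1 :: s1 ++ [a2] = (s0 ++ a1 :: s1) ++ [a2] := by simp
        have ha2 : s[(s0 ++ a1 :: s1).length]? = some a2 :=
          prefix_concat_getElem? (by rw [← hureq]; exact hu)
        have ha1 : s[s0.length]? = some a1 := by
          have : (s0 ++ [a1]) ++ (s1 ++ [a2]) = s0 ++ a1 :: s1 ++ [a2] := by simp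
          exact prefix_concat_getElem?
            ((List.prefix_append (s0 ++ [a1]) (s1 ++ [a2])).trans (by rw [this]; exact hu))
        have hpre1 : s0 ++ [a1] <+: s := by
          have : (s0 ++ [a1]) ++ (s1 ++ [a2]) = s0 ++ a1 :: s1 ++ [a2] := by simp
          exact (List.prefix_append (s0 ++ [a1]) (s1 ++ [a2])).trans (by rw [this]; exact hu)
        have hlen2 : (s0 ++ a1 :: s1).length + 1 = n := by
          rw [← hulen]; simp; omega
        rcases List.mem_append.1 hx with hx | hx
        · have hxmem : x ∈ s0 ++ [a1] := pview_subset hv' x hx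
          by_cases hnm : (s0 ++ a1 :: s1).length = mA
          · have ha2a : a2 = a := by
              rw [hnm] at ha2
              exact Option.some.inj (ha2.symm.trans hmA)
            have ha1q : a1 = q := justifier_unique Q (ha2a ▸ himm12) himm
            have hlq : s0.length = iQ := nodup_index_unique hnd ha1 (ha1q ▸ hiQ)
            left
            have := mem_index_lt hnd hpre1 hxmem hj
            simp at this; omega
          · have hgt : mA < (s0 ++ a1 :: s1).length := by
              have h1 : mA < n := hn
              simp only [List.length_append, List.length_cons] at hlen2 hnm ⊢
              omega
            have hA := partA (s0 ++ a1 :: s1).length a2 a1 s0.length hlen2 hgt ha2 himm12 ha1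
            rcases hA with hle | hgt1
            · left
              have := mem_index_lt hnd hpre1 hxmem hj
              simp at this; omega
            · have : (s0 ++ [a1]).length = s0.length + 1 := by simp
              refine (IH (s0.length + 1) ?_).2.1 (s0 ++ [a1]) v' (by omega)
                (Or.inr (by omega)) hpre1 (by simp) hv' x hx j hj
              simp at hlen2; omega
        · simp at hx; subst hx
          right
          have : j = (s0 ++ a1 :: s1).length := nodup_index_unique hnd hj ha2
          omega
    · -- O-view part
      intro u v hn hside hu hulen hview
      cases hview with
      | nil => simp at hulen; omega
      | @neg s0 v' a' hpol hv' =>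
        intro x hx j hj
        have ha' : s[s0.length]? = some a' := prefix_concat_getElem? hu
        have hs0len : s0.length + 1 = n := by simpa using hulen
        rcases List.mem_append.1 hx with hx | hx
        · by_cases hnm : s0.length = mA
          · exfalso
            have haa : a' = a := by
              rw [hnm] at ha'
              exact Option.some.inj (ha'.symm.trans hmA)
            rcases hside with h | h
            · rw [haa, h] at hpol; simp at hpol
            · omega
          · have hlt' : mA < s0.length := by omega
            have hside' : Q.pol a = true ∨ mA + 2 ≤ s0.length := by
              by_cases h1 : s0.length = mA + 1
              · left
                have := halt mA a a' hmA (by rw [← h1]; exact ha')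
                rw [hpol] at this
                simpa using this
              · right; omega
            have hs0p : s0 <+: s := (List.prefix_append s0 [a']).trans hu
            exact (IH s0.length (by omega)).2.2 s0 v' hlt' hside' hs0p rfl hv' x hx j hj
        · simp at hx; subst hx
          right
          have : j = s0.length := nodup_index_unique hnd hj ha'
          omega
      | @pos s0 s1 v' a1 a2 hp1 hp2 himm12 hv' =>
        intro x hx j hj
        have hureq : s0 ++ a1 :: s1 ++ [a2] = (s0 ++ a1 :: s1) ++ [a2] := by simp
        have ha2 : s[(s0 ++ a1 :: s1).length]? = some a2 :=
          prefix_concat_getElem? (by rw [← hureq]; exact hu)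
        have ha1 : s[s0.length]? = some a1 := by
          have : (s0 ++ [a1]) ++ (s1 ++ [a2]) = s0 ++ a1 :: s1 ++ [a2] := by simp
          exact prefix_concat_getElem?
            ((List.prefix_append (s0 ++ [a1]) (s1 ++ [a2])).trans (by rw [this]; exact hu))
        have hpre1 : s0 ++ [a1] <+: s := by
          have : (s0 ++ [a1]) ++ (s1 ++ [a2]) = s0 ++ a1 :: s1 ++ [a2] := by simp
          exact (List.prefix_append (s0 ++ [a1]) (s1 ++ [a2])).trans (by rw [this]; exact hu)
        have hlen2 : (s0 ++ a1 :: s1).length + 1 = n := by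
          rw [← hulen]; simp; omega
        rcases List.mem_append.1 hx with hx | hx
        · have hxmem : x ∈ s0 ++ [a1] := oview_subset hv' x hx
          by_cases hnm : (s0 ++ a1 :: s1).length = mA
          · have ha2a : a2 = a := by
              rw [hnm] at ha2
              exact Option.some.inj (ha2.symm.trans hmA)
            have ha1q : a1 = q := justifier_unique Q (ha2a ▸ himm12) himm
            have hlq : s0.length = iQ := nodup_index_unique hnd ha1 (ha1q ▸ hiQ)
            left
            have := mem_index_lt hnd hpre1 hxmem hj
            simp at this; omega
          · have hgt : mA < (s0 ++ a1 :: s1).length := by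
              have h1 : mA < n := hn
              simp only [List.length_append, List.length_cons] at hlen2 hnm ⊢
              omega
            have hA := partA (s0 ++ a1 :: s1).length a2 a1 s0.length hlen2 hgt ha2 himm12 ha1
            rcases hA with hle | hgt1
            · left
              have := mem_index_lt hnd hpre1 hxmem hj
              simp at this; omega
            · refine (IH (s0.length + 1) ?_).2.2 (s0 ++ [a1]) v' (by omega)
                (Or.inr (by omega)) hpre1 (by simp) hv' x hx j hj
              simp at hlen2; omega
        · simp at hx; subst hx
          right
          have : j = (s0 ++ a1 :: s1).length := nodup_index_unique hnd hj ha2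
          omega
  intro k x d j hk hx hdx hdj
  exact (main (k + 1)).1 k x d j rfl hk hx hdx hdj

end Segment

/-- Every complete alternating play on a negative arena — well-bracketed in the
weak non-alternating sense, P-visible, O-visible, and with every question
answered — is well-bracketed in the strong sense: every answer answers the pending
question at the time it is played. -/
theorem complete_implies_strong_wellBracketing {α : Type} (Q : QArena α)
    (hneg : ∀ a : α, MinimalOf Q.le a → Q.pol a = false)
    (s : List α)
    (hplay : AltPlayOf Q.le Q.conflict Q.pol s)
    (hweak : WeakWBOf Q.le Q.qa s)
    (hP : ∀ t v : List α, t <+: s → PViewRelOf Q.le Q.pol t v →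
        AltPlayOf Q.le Q.conflict Q.pol v)
    (hO : ∀ t v : List α, t <+: s → OViewRelOf Q.le Q.pol t v →
        AltPlayOf Q.le Q.conflict Q.pol v)
    (hcomplete : ∀ q ∈ s, Q.qa q = true → AnsweredIn Q.le Q.qa q s) :
    WBPlayOf Q.le Q.qa s := by
  intro t a0 hpre hqa0
  have hnd : s.Nodup := hplay.2.1
  have hconf := hplay.1
  -- a0 is not minimal
  have hmin : ¬ MinimalOf Q.le a0 := fun hm => by
    rw [Q.question_opening a0 hm] at hqa0; simp at hqa0
  obtain ⟨q, himm⟩ := exists_justifier Q hmin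
  have hqq : Q.qa q = true := by
    by_contra h
    have h' : Q.qa q = false := by simpa using h
    exact himm.2.1 (Q.answer_closing q h' a0 himm.1).symm
  -- q ∈ t
  have hqmem : q ∈ t := by
    have hc := (hconf (t ++ [a0]) hpre).2.1 a0 (by simp) q himm.1
    simp at hc
    rcases hc with h | h
    · exact h
    · exact absurd h himm.2.1
  have ht : t <+: s := (List.prefix_append t [a0]).trans hpre
  have htnd : t.Nodup := ht.sublist.nodup hnd
  obtain ⟨i, hi⟩ := List.mem_iff_getElem?.1 hqmem
  have hilen : i < t.length := (List.getElem?_eq_some_iff.1 hi).1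
  have hsi : s[i]? = some q := by rw [prefix_getElem? ht hilen]; exact hi
  have hsmA : s[t.length]? = some a0 := prefix_concat_getElem? hpre
  have hnoans : ¬ AnsweredIn Q.le Q.qa q t := hweak.1 t a0 hpre q hqmem hqq himm
  refine ⟨q, ⟨i, hi, hqq, hnoans, ?_⟩, himm⟩
  intro j q' hij hj hq'
  by_contra hna
  have hjlen : j < t.length := (List.getElem?_eq_some_iff.1 hj).1
  have hsj : s[j]? = some q' := by rw [prefix_getElem? ht hjlen]; exact hj
  have hq's : q' ∈ s := ht.subset (List.mem_iff_getElem?.2 ⟨j, hj⟩)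
  obtain ⟨b, hbmem, hbqa, hbimm⟩ := hcomplete q' hq's hq'
  obtain ⟨kb, hkb⟩ := List.mem_iff_getElem?.1 hbmem
  have hbt : b ∉ t := fun h => hna ⟨b, h, hbqa, hbimm⟩
  have hba : b ≠ a0 := by
    intro h
    have : q' = q := justifier_unique Q (h ▸ hbimm) himm
    have : i = j := nodup_index_unique htnd hi (this ▸ hj)
    omega
  have hkbgt : t.length < kb := by
    rcases Nat.lt_trichotomy kb t.length with h | h | h
    · exfalso
      apply hbt
      have : t[kb]? = some b := by rw [← prefix_getElem? ht h]; exact hkb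
      exact List.mem_iff_getElem?.2 ⟨kb, this⟩
    · exfalso
      apply hba
      rw [h] at hkb
      exact Option.some.inj (hkb.symm.trans hsmA)
    · exact h
  have hmax : ∀ x, ¬ immOf Q.le a0 x := by
    intro x hx
    exact hx.2.1 (Q.answer_closing a0 hqa0 x hx.1).symm
  have := segment_lemma Q hneg s hplay hP hO hsi hsmA hilen himm hmax
    kb b q' j hkbgt hkb hbimm hsj
  omega
end
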